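/- For every integer R ≥ 1, as y → 0⁺ one has M(y) = Σ_{r=1}^{R} r (φ_r(y) − φ_{r−1}(y)) + O(y^{R+1}); that is, there exist constants C > 0 and y₀ > 0 such that |M(y) − Σ_{r=1}^{R} r (φ_r(y) − φ_{r−1}(y))| ≤ C y^{R+1} for all 0 < y < y₀. -/

import Mathlib

open scoped BigOperators

/-- `σ` has an increasing subsequence of length `l`. -/
def hasIncSubseq (k : ℕ) (σ : Equiv.Perm (Fin k)) (l : ℕ) : Prop :=
  ∃ s : Fin l → Fin k, StrictMono s ∧ StrictMono (⇑σ ∘ s)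

/-- `f k r`: the number of permutations of `{1,…,k}` all of whose increasing
subsequences have length at most `r`. -/
noncomputable def f (k r : ℕ) : ℕ :=
  Nat.card {σ : Equiv.Perm (Fin k) // ∀ l, hasIncSubseq k σ l → l ≤ r}

/-- `D r t = Σ_{k≥0} f_{k,r} t^{2k}/(k!)²`. -/
noncomputable def D (r : ℕ) (t : ℝ) : ℝ :=
  ∑' k : ℕ, (f k r : ℝ) * t ^ (2 * k) / ((Nat.factorial k : ℝ)) ^ 2

/-- `F(r;y) = e^{-y} Σ_{k≥r} R_{k,r} y^k/(k!)²` with `R_{k,r} = k! - f_{k,r-1}`. -/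
noncomputable def Fdist (r : ℕ) (y : ℝ) : ℝ :=
  Real.exp (-y) *
    ∑' k : ℕ, (((r + k).factorial : ℝ) - (f (r + k) (r - 1) : ℝ)) * y ^ (r + k)
      / (((r + k).factorial : ℝ)) ^ 2

/-- `b j t = I_j(2t) = Σ_{m≥0} t^{2m+j}/(m!(m+j)!)`. -/
noncomputable def b (j : ℕ) (t : ℝ) : ℝ :=
  ∑' m : ℕ, t ^ (2 * m + j) / ((Nat.factorial m : ℝ) * (Nat.factorial (m + j) : ℝ))

/-- `φ_r(y) = e^{-y} D_r(√y)`. -/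
noncomputable def phi (r : ℕ) (y : ℝ) : ℝ := Real.exp (-y) * D r (Real.sqrt y)

/-- First moment `M(y) = Σ_{r≥0} (1 - φ_r(y))`. -/
noncomputable def M (y : ℝ) : ℝ := ∑' r : ℕ, (1 - phi r y)

/-- Second moment `S(y) = Σ_{r≥0} (2r+1)(1 - φ_r(y))`. -/
noncomputable def S (y : ℝ) : ℝ := ∑' r : ℕ, (2 * (r : ℝ) + 1) * (1 - phi r y)

/-- Variance `V(y) = S(y) - M(y)²`. -/
noncomputable def V (y : ℝ) : ℝ := S y - (M y) ^ 2

lemma incSubseq_le (k : ℕ) (σ : Equiv.Perm (Fin k)) (l : ℕ) (h : hasIncSubseq k σ l) : l ≤ k := by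
  obtain ⟨s, hs, -⟩ := h
  simpa using Fintype.card_le_of_injective s hs.injective

lemma f_le (k r : ℕ) : f k r ≤ k.factorial := by
  have := Finite.card_subtype_le (fun σ : Equiv.Perm (Fin k) => ∀ l, hasIncSubseq k σ l → l ≤ r)
  simpa [f, Nat.card_eq_fintype_card, Fintype.card_perm, Fintype.card_fin] using this

lemma f_eq (k r : ℕ) (h : k ≤ r) : f k r = k.factorial := by
  have hall : ∀ σ : Equiv.Perm (Fin k), ∀ l, hasIncSubseq k σ l → l ≤ r :=
    fun σ l hl => (incSubseq_le k σ l hl).trans h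
  rw [f, Nat.card_congr (Equiv.subtypeUnivEquiv hall), Nat.card_eq_fintype_card,
    Fintype.card_perm, Fintype.card_fin]

lemma exp_tsum (y : ℝ) : Real.exp y = ∑' k : ℕ, y ^ k / (Nat.factorial k : ℝ) := by
  rw [Real.exp_eq_exp_ℝ, NormedSpace.exp_eq_tsum_div]

lemma term_nonneg (r k : ℕ) (y : ℝ) (hy : 0 ≤ y) :
    0 ≤ y ^ k / (Nat.factorial k : ℝ) - (f k r : ℝ) * y ^ k / ((Nat.factorial k : ℝ)) ^ 2 := by
  have hf : (f k r : ℝ) ≤ (Nat.factorial k : ℝ) := by exact_mod_cast f_le k r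
  have hfac : (0:ℝ) < (Nat.factorial k : ℝ) := by exact_mod_cast Nat.factorial_pos k
  have hyk : (0:ℝ) ≤ y ^ k := pow_nonneg hy k
  rw [sub_nonneg]
  calc (f k r : ℝ) * y ^ k / ((Nat.factorial k : ℝ)) ^ 2
      ≤ (Nat.factorial k : ℝ) * y ^ k / ((Nat.factorial k : ℝ)) ^ 2 := by
        gcongr
    _ = y ^ k / (Nat.factorial k : ℝ) := by field_simp

lemma term_le (r k : ℕ) (y : ℝ) (hy : 0 ≤ y) :
    y ^ k / (Nat.factorial k : ℝ) - (f k r : ℝ) * y ^ k / ((Nat.factorial k : ℝ)) ^ 2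
      ≤ y ^ k / (Nat.factorial k : ℝ) := by
  have hfac : (0:ℝ) < (Nat.factorial k : ℝ) := by exact_mod_cast Nat.factorial_pos k
  have : (0:ℝ) ≤ (f k r : ℝ) * y ^ k / ((Nat.factorial k : ℝ)) ^ 2 := by positivity
  linarith

lemma term_zero (r k : ℕ) (y : ℝ) (h : k ≤ r) :
    y ^ k / (Nat.factorial k : ℝ) - (f k r : ℝ) * y ^ k / ((Nat.factorial k : ℝ)) ^ 2 = 0 := by
  have hfac : ((Nat.factorial k : ℝ)) ≠ 0 := by positivity
  rw [f_eq k r h]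
  field_simp
  ring

lemma summable_a (r : ℕ) (y : ℝ) (hy : 0 ≤ y) :
    Summable (fun k : ℕ => (f k r : ℝ) * y ^ k / ((Nat.factorial k : ℝ)) ^ 2) := by
  refine Summable.of_nonneg_of_le (fun k => ?_) (fun k => ?_) (Real.summable_pow_div_factorial y)
  · have hfac : (0:ℝ) < (Nat.factorial k : ℝ) := by exact_mod_cast Nat.factorial_pos k
    positivity
  · have := term_nonneg r k y hy
    linarith

lemma summable_g (r : ℕ) (y : ℝ) (hy : 0 ≤ y) :
    Summable (fun k : ℕ => y ^ k / (Nat.factorial k : ℝ)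
      - (f k r : ℝ) * y ^ k / ((Nat.factorial k : ℝ)) ^ 2) :=
  (Real.summable_pow_div_factorial y).sub (summable_a r y hy)

lemma one_sub_phi_eq (r : ℕ) (y : ℝ) (hy : 0 ≤ y) :
    1 - phi r y = Real.exp (-y) * ∑' k : ℕ,
      (y ^ k / (Nat.factorial k : ℝ) - (f k r : ℝ) * y ^ k / ((Nat.factorial k : ℝ)) ^ 2) := by
  have hsq : ∀ k : ℕ, (Real.sqrt y) ^ (2 * k) = y ^ k := by
    intro k
    rw [pow_mul, Real.sq_sqrt hy]
  have hD : D r (Real.sqrt y) = ∑' k : ℕ, (f k r : ℝ) * y ^ k / ((Nat.factorial k : ℝ)) ^ 2 := by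
    unfold D; congr 1; ext k; rw [hsq k]
  rw [phi, hD, Summable.tsum_sub (Real.summable_pow_div_factorial y) (summable_a r y hy),
    ← exp_tsum y, mul_sub, ← Real.exp_add]
  simp

lemma one_sub_phi_nonneg (r : ℕ) (y : ℝ) (hy : 0 ≤ y) : 0 ≤ 1 - phi r y := by
  rw [one_sub_phi_eq r y hy]
  have : 0 ≤ ∑' k : ℕ, (y ^ k / (Nat.factorial k : ℝ)
      - (f k r : ℝ) * y ^ k / ((Nat.factorial k : ℝ)) ^ 2) :=
    tsum_nonneg (fun k => term_nonneg r k y hy)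
  positivity

lemma one_sub_phi_le (r : ℕ) (y : ℝ) (hy : 0 ≤ y) : 1 - phi r y ≤ y ^ (r + 1) := by
  set g : ℕ → ℝ := fun k => y ^ k / (Nat.factorial k : ℝ)
      - (f k r : ℝ) * y ^ k / ((Nat.factorial k : ℝ)) ^ 2 with hg
  have hsum : Summable g := summable_g r y hy
  have hshift := Summable.sum_add_tsum_nat_add (r + 1) hsum
  have hzero : ∑ k ∈ Finset.range (r + 1), g k = 0 := by
    apply Finset.sum_eq_zero
    intro k hk
    exact term_zero r k y (Nat.lt_succ_iff.mp (Finset.mem_range.mp hk))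
  have htail : (∑' k, g k) = ∑' j : ℕ, g (j + (r + 1)) := by
    rw [← hshift, hzero, zero_add]
  have hbound : (∑' j : ℕ, g (j + (r + 1))) ≤ y ^ (r + 1) * Real.exp y := by
    have hexp : Real.exp y = ∑' j : ℕ, y ^ j / (Nat.factorial j : ℝ) := exp_tsum y
    rw [hexp, ← tsum_mul_left]
    refine Summable.tsum_le_tsum (fun j => ?_) ((summable_nat_add_iff (r+1)).mpr hsum)
      ((Real.summable_pow_div_factorial y).mul_left _)
    calc g (j + (r + 1)) ≤ y ^ (j + (r + 1)) / (Nat.factorial (j + (r + 1)) : ℝ) :=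
          term_le r (j + (r+1)) y hy
      _ ≤ y ^ (j + (r + 1)) / (Nat.factorial j : ℝ) := by
          have h1 : (0:ℝ) < (Nat.factorial j : ℝ) := by exact_mod_cast Nat.factorial_pos j
          have h2 : (Nat.factorial j : ℝ) ≤ (Nat.factorial (j + (r+1)) : ℝ) := by
            exact_mod_cast Nat.factorial_le (Nat.le_add_right j (r+1))
          gcongr
      _ = y ^ (r + 1) * (y ^ j / (Nat.factorial j : ℝ)) := by
          rw [pow_add]; ring
  have := one_sub_phi_eq r y hy
  rw [this, ← hg, htail]
  calc Real.exp (-y) * ∑' j : ℕ, g (j + (r + 1))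
      ≤ Real.exp (-y) * (y ^ (r + 1) * Real.exp y) := by
        gcongr
    _ = y ^ (r + 1) := by rw [← mul_assoc, mul_comm (Real.exp (-y)), mul_assoc, ← Real.exp_add]
                          simp

lemma abel_identity (y : ℝ) (R : ℕ) :
    ∑ r ∈ Finset.Icc 1 R, (r : ℝ) * (phi r y - phi (r - 1) y)
      = (∑ r ∈ Finset.range R, (1 - phi r y)) - (R : ℝ) * (1 - phi R y) := by
  induction R with
  | zero => simp
  | succ n ih =>
      rw [Finset.sum_Icc_succ_top (Nat.succ_le_succ (Nat.zero_le n)), ih,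
        Finset.sum_range_succ]
      have : n + 1 - 1 = n := rfl
      rw [this]
      push_cast
      ring

theorem stmt14 (R : ℕ) (hR : 1 ≤ R) :
    ∃ C > (0 : ℝ), ∃ y₀ > (0 : ℝ), ∀ y : ℝ, 0 < y → y < y₀ →
      |M y - ∑ r ∈ Finset.Icc 1 R, (r : ℝ) * (phi r y - phi (r - 1) y)| ≤ C * y ^ (R + 1) := by
  refine ⟨(R : ℝ) + 2, by positivity, 1/2, by norm_num, fun y hy hy2 => ?_⟩
  have hy0 : 0 ≤ y := hy.le
  have hy1 : y < 1 := by linarith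
  set G : ℕ → ℝ := fun r => 1 - phi r y with hG
  have hGnn : ∀ r, 0 ≤ G r := fun r => one_sub_phi_nonneg r y hy0
  have hGle : ∀ r, G r ≤ y ^ (r + 1) := fun r => one_sub_phi_le r y hy0
  have hgeo : Summable (fun r : ℕ => y ^ (r + 1)) := by
    simpa [pow_succ, mul_comm] using
      (summable_geometric_of_lt_one hy0 hy1).mul_left y
  have hGsum : Summable G := Summable.of_nonneg_of_le hGnn hGle hgeo
  have hshift := Summable.sum_add_tsum_nat_add R hGsum
  have hM : M y = (∑ r ∈ Finset.range R, G r) + ∑' j : ℕ, G (j + R) := by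
    rw [M, ← hshift]
  have htail_nn : 0 ≤ ∑' j : ℕ, G (j + R) := tsum_nonneg (fun j => hGnn _)
  have htail_le : (∑' j : ℕ, G (j + R)) ≤ 2 * y ^ (R + 1) := by
    have h1 : (∑' j : ℕ, G (j + R)) ≤ ∑' j : ℕ, y ^ (R + 1) * y ^ j := by
      refine Summable.tsum_le_tsum (fun j => ?_) ((summable_nat_add_iff R).mpr hGsum)
        ((summable_geometric_of_lt_one hy0 hy1).mul_left _)
      calc G (j + R) ≤ y ^ (j + R + 1) := hGle _
        _ = y ^ (R + 1) * y ^ j := by rw [← pow_add]; ring_nf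
    have h2 : (∑' j : ℕ, y ^ (R + 1) * y ^ j) = y ^ (R + 1) * (1 - y)⁻¹ := by
      rw [tsum_mul_left, tsum_geometric_of_lt_one hy0 hy1]
    have h3 : (1 - y)⁻¹ ≤ 2 := by
      rw [inv_le_comm₀ (by linarith) (by norm_num)]
      linarith
    calc (∑' j : ℕ, G (j + R)) ≤ y ^ (R + 1) * (1 - y)⁻¹ := by rw [← h2]; exact h1
      _ ≤ y ^ (R + 1) * 2 := by gcongr
      _ = 2 * y ^ (R + 1) := by ring
  have hdiff : M y - ∑ r ∈ Finset.Icc 1 R, (r : ℝ) * (phi r y - phi (r - 1) y)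
      = (∑' j : ℕ, G (j + R)) + (R : ℝ) * G R := by
    rw [abel_identity, hM]; ring
  rw [hdiff, abs_of_nonneg (add_nonneg htail_nn (mul_nonneg (Nat.cast_nonneg R) (hGnn R)))]
  have hRG : (R : ℝ) * G R ≤ (R : ℝ) * y ^ (R + 1) := by
    have : (0:ℝ) ≤ R := Nat.cast_nonneg R
    exact mul_le_mul_of_nonneg_left (hGle R) this
  calc (∑' j : ℕ, G (j + R)) + (R : ℝ) * G R
      ≤ 2 * y ^ (R + 1) + (R : ℝ) * y ^ (R + 1) := add_le_add htail_le hRG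
    _ = ((R : ℝ) + 2) * y ^ (R + 1) := by ring
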